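/- Let D_i ∈ End(F) act on the free algebra F by D_i(1) = 0 and D_i(w_{i_1}⋯w_{i_k}) = δ_{i,i_k} w_{i_1}⋯w_{i_{k-1}}. Then D_i is a twisted derivation for the quantum shuffle product: D_i(w_j) = δ_{ij} and D_i(x ⋆ y) = q_{α_i, μ} D_i(x) ⋆ y + x ⋆ D_i(y) for all x ∈ F and homogeneous y ∈ F_μ. -/

import Mathlib

/-- The free associative algebra `F` on generators `w_i` (`i ∈ I`), realized as
the monoid algebra of the free monoid on `I` (words = lists). -/
abbrev FA (K I : Type*) [Field K] : Type _ := MonoidAlgebra K (FreeMonoid I)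

variable {K I : Type*} [Field K] [Fintype I] [DecidableEq I]

/-- The generator `w_i` of the free algebra. -/
noncomputable def wgen (K : Type*) [Field K] {I : Type*} (i : I) : FA K I :=
  MonoidAlgebra.single (FreeMonoid.of i) 1

/-- `q_{α_i, ν}` where `ν` is the degree of the word `w` (here `w` is a list of
letters, and the degree records the number of occurrences of each letter). -/
noncomputable def qrow (qm : I → I → K) (i : I) (w : List I) : K :=
  ∏ k : I, qm i k ^ (w.count k)

/-- Auxiliary recursion for the quantum shuffle product of two basis words;
the arguments are the *reversed* words. It implements
`(x w_i) ⋆ (y w_j) = (x w_i ⋆ y) w_j + q_{α_i, ν+α_j} (x ⋆ y w_j) w_i`. -/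
noncomputable def shAux (qm : I → I → K) : List I → List I → FA K I
  | [], b => MonoidAlgebra.single (FreeMonoid.ofList b.reverse) 1
  | a, [] => MonoidAlgebra.single (FreeMonoid.ofList a.reverse) 1
  | i :: a', j :: b' =>
      shAux qm (i :: a') b' * MonoidAlgebra.single (FreeMonoid.of j) 1
        + (qrow qm i b' * qm i j) •
            (shAux qm a' (j :: b') * MonoidAlgebra.single (FreeMonoid.of i) 1)
  termination_by a b => a.length + b.length

/-- The quantum shuffle product `⋆` on the free algebra, extended bilinearly
from basis words. -/
noncomputable def shuffle (qm : I → I → K) (x y : FA K I) : FA K I :=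
  Finsupp.sum x.coeff fun a ca =>
    Finsupp.sum y.coeff fun b cb =>
      (ca * cb) • shAux qm (FreeMonoid.toList a).reverse (FreeMonoid.toList b).reverse

/-- The `m`-fold quantum shuffle power `w_i^{⋆m}`. -/
noncomputable def starPow (qm : I → I → K) (i : I) : ℕ → FA K I
  | 0 => 1
  | n + 1 => shuffle qm (starPow qm i n) (wgen K i)

/-- The action of `D_i` on a basis word: delete the last letter if it is `i`,
otherwise `0` (and `D_i 1 = 0`). -/
noncomputable def Dword (i : I) (w : List I) : FA K I :=
  match w.reverse with
  | [] => 0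
  | a :: r => if a = i then MonoidAlgebra.single (FreeMonoid.ofList r.reverse) 1 else 0

/-- The linear endomorphism `D_i` of `F` with `D_i(w_{i_1}⋯w_{i_k}) =
δ_{i,i_k} w_{i_1}⋯w_{i_{k-1}}` and `D_i(1) = 0`. -/
noncomputable def Dop (i : I) : FA K I →ₗ[K] FA K I :=
  (Finsupp.lsum K fun w =>
    LinearMap.toSpanSingleton K (FA K I) (Dword i (FreeMonoid.toList w)))
      ∘ₗ (MonoidAlgebra.coeffLinearEquiv K).toLinearMap

set_option linter.unusedSectionVars false


lemma Dop_single (i : I) (w : FreeMonoid I) (c : K) :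
    Dop i (MonoidAlgebra.single w c) = c • Dword i (FreeMonoid.toList w) := by
  rw [Dop, LinearMap.comp_apply, LinearEquiv.coe_coe, MonoidAlgebra.coeffLinearEquiv_apply,
    MonoidAlgebra.coeff_single]; erw [Finsupp.lsum_apply]
  rw [Finsupp.sum_single_index (by simp)]
  simp [LinearMap.toSpanSingleton_apply]

noncomputable def shuffleHom (qm : I → I → K) : FA K I →ₗ[K] FA K I →ₗ[K] FA K I :=
  (Finsupp.lsum K fun a => LinearMap.toSpanSingleton K (FA K I →ₗ[K] FA K I)
    ((Finsupp.lsum K fun b => LinearMap.toSpanSingleton K (FA K I)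
      (shAux qm (FreeMonoid.toList a).reverse (FreeMonoid.toList b).reverse))
        ∘ₗ (MonoidAlgebra.coeffLinearEquiv K).toLinearMap))
    ∘ₗ (MonoidAlgebra.coeffLinearEquiv K).toLinearMap

lemma shuffleHom_eq (qm : I → I → K) (x y : FA K I) :
    shuffleHom qm x y = shuffle qm x y := by
  rw [shuffleHom, LinearMap.comp_apply, LinearEquiv.coe_coe,
    MonoidAlgebra.coeffLinearEquiv_apply]; erw [Finsupp.lsum_apply]
  rw [show ((Finsupp.sum x.coeff fun a ca => (LinearMap.toSpanSingleton K (FA K I →ₗ[K] FA K I)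
      ((Finsupp.lsum K fun b => LinearMap.toSpanSingleton K (FA K I)
      (shAux qm (FreeMonoid.toList a).reverse (FreeMonoid.toList b).reverse))
        ∘ₗ (MonoidAlgebra.coeffLinearEquiv K).toLinearMap)) ca) y)
    = Finsupp.sum x.coeff fun a ca => ((LinearMap.toSpanSingleton K (FA K I →ₗ[K] FA K I)
      ((Finsupp.lsum K fun b => LinearMap.toSpanSingleton K (FA K I)
      (shAux qm (FreeMonoid.toList a).reverse (FreeMonoid.toList b).reverse))
        ∘ₗ (MonoidAlgebra.coeffLinearEquiv K).toLinearMap)) ca) y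
    from map_finsuppSum (LinearMap.applyₗ y) _ _]
  rw [shuffle]
  refine Finsupp.sum_congr fun a _ => ?_
  rw [LinearMap.toSpanSingleton_apply, LinearMap.smul_apply, LinearMap.comp_apply,
    LinearEquiv.coe_coe, MonoidAlgebra.coeffLinearEquiv_apply]; erw [Finsupp.lsum_apply]; rw [
    Finsupp.smul_sum]
  refine Finsupp.sum_congr fun b _ => ?_
  rw [LinearMap.toSpanSingleton_apply, mul_smul]
set_option linter.unusedSectionVars false

lemma qrow_nil (qm : I → I → K) (i : I) : qrow qm i [] = 1 := by simp [qrow]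

lemma qrow_cons (qm : I → I → K) (i j : I) (l : List I) :
    qrow qm i (j :: l) = qm i j * qrow qm i l := by
  unfold qrow
  have h : ∀ k : I, qm i k ^ ((j :: l).count k)
      = (if k = j then qm i k else 1) * qm i k ^ (l.count k) := by
    intro k
    by_cases h : k = j <;> simp [List.count_cons, h, @eq_comm _ j k, pow_succ, mul_comm]
  rw [Finset.prod_congr rfl fun k _ => h k, Finset.prod_mul_distrib,
    Finset.prod_ite_eq' Finset.univ j (qm i), if_pos (Finset.mem_univ j)]

lemma qrow_reverse (qm : I → I → K) (i : I) (l : List I) :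
    qrow qm i l.reverse = qrow qm i l := by
  simp [qrow, List.count_reverse]

lemma Dword_concat (i j : I) (l : List I) :
    Dword i (l ++ [j]) =
      (if j = i then MonoidAlgebra.single (FreeMonoid.ofList l) 1 else (0 : FA K I)) := by
  simp [Dword, List.reverse_append]

lemma Dop_mul_gen (i j : I) (x : FA K I) :
    Dop i (x * MonoidAlgebra.single (FreeMonoid.of j) 1) = if j = i then x else 0 := by
  induction x using MonoidAlgebra.induction_linear with
  | zero => simp
  | add f g hf hg => rw [add_mul, map_add, hf, hg]; split <;> simp
  | single w c =>
    rw [MonoidAlgebra.single_mul_single, Dop_single]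
    have h : FreeMonoid.toList (w * FreeMonoid.of j) = FreeMonoid.toList w ++ [j] := rfl
    rw [h, Dword_concat]
    split <;> simp [MonoidAlgebra.smul_single', FreeMonoid.ofList_toList]

lemma shAux_nil_left (qm : I → I → K) (b : List I) :
    shAux qm [] b = MonoidAlgebra.single (FreeMonoid.ofList b.reverse) 1 := by
  cases b <;> simp [shAux]

lemma shAux_nil_right (qm : I → I → K) (a : List I) :
    shAux qm a [] = MonoidAlgebra.single (FreeMonoid.ofList a.reverse) 1 := by
  cases a <;> simp [shAux]

/-- The left term in the twisted Leibniz rule at the level of (reversed) words. -/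
noncomputable def dTermL (qm : I → I → K) (i : I) : List I → List I → FA K I
  | [], _ => 0
  | i' :: a', b => if i' = i then qrow qm i b • shAux qm a' b else 0

/-- The right term in the twisted Leibniz rule at the level of (reversed) words. -/
noncomputable def dTermR (qm : I → I → K) (i : I) : List I → List I → FA K I
  | _, [] => 0
  | a, j :: b' => if j = i then shAux qm a b' else 0

lemma Dop_shAux (qm : I → I → K) (i : I) (a b : List I) :
    Dop i (shAux qm a b) = dTermL qm i a b + dTermR qm i a b := by
  cases a with
  | nil =>
    cases b with
    | nil => simp [shAux, Dop_single, Dword, dTermL, dTermR]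
    | cons j b' =>
      rw [shAux_nil_left, Dop_single]
      simp only [Dword, FreeMonoid.toList_ofList, List.reverse_reverse, one_smul,
        dTermL, dTermR, zero_add]
      split <;> simp [shAux_nil_left]
  | cons i1 a' =>
    cases b with
    | nil =>
      rw [shAux_nil_right, Dop_single]
      simp only [Dword, FreeMonoid.toList_ofList, List.reverse_reverse, one_smul,
        dTermL, dTermR, add_zero, qrow_nil]
      split <;> simp [shAux_nil_right]
    | cons j b' =>
      rw [shAux, map_add, map_smul, Dop_mul_gen, Dop_mul_gen, add_comm]
      simp only [dTermL, dTermR]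
      congr 1
      by_cases h : i1 = i
      · subst h; rw [if_pos rfl, if_pos rfl, qrow_cons, mul_comm]
      · rw [if_neg h, if_neg h, smul_zero]

lemma shuffleHom_single_single (qm : I → I → K) (a b : FreeMonoid I) :
    shuffleHom qm (MonoidAlgebra.single a (1 : K)) (MonoidAlgebra.single b (1 : K))
      = shAux qm (FreeMonoid.toList a).reverse (FreeMonoid.toList b).reverse := by
  unfold shuffleHom
  rw [LinearMap.comp_apply, LinearEquiv.coe_coe, MonoidAlgebra.coeffLinearEquiv_apply,
    MonoidAlgebra.coeff_single]
  erw [Finsupp.lsum_single, LinearMap.toSpanSingleton_apply, one_smul]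
  rw [LinearMap.comp_apply, LinearEquiv.coe_coe, MonoidAlgebra.coeffLinearEquiv_apply,
    MonoidAlgebra.coeff_single]
  erw [Finsupp.lsum_single, LinearMap.toSpanSingleton_apply, one_smul]

lemma key (qm : I → I → K) (i : I) (u v : List I) :
    Dop i (shAux qm u.reverse v.reverse)
      = qrow qm i v • shuffleHom qm (Dword i u) (MonoidAlgebra.single (FreeMonoid.ofList v) 1)
        + shuffleHom qm (MonoidAlgebra.single (FreeMonoid.ofList u) 1) (Dword i v) := by
  rw [Dop_shAux]
  congr 1
  · unfold Dword
    cases hu : u.reverse with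
    | nil => simp [dTermL]
    | cons i' a' =>
      by_cases hi : i' = i
      · simp [dTermL, hi, shuffleHom_single_single, qrow_reverse]
      · simp [dTermL, hi]
  · unfold Dword
    cases hv : v.reverse with
    | nil => simp [dTermR]
    | cons j b' =>
      by_cases hj : j = i
      · simp [dTermR, hj, shuffleHom_single_single]
      · simp [dTermR, hj]

lemma bil_expand (B : FA K I →ₗ[K] FA K I →ₗ[K] FA K I) (x y : FA K I)
    (f : FreeMonoid I → FA K I) :
    B (x.coeff.sum fun a ca => ca • f a) y
      = x.coeff.sum fun a ca => y.coeff.sum fun b cb =>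
          (ca * cb) • B (f a) (MonoidAlgebra.single b 1) := by
  have h1 : B (x.coeff.sum fun a ca => ca • f a) = x.coeff.sum fun a ca => ca • B (f a) := by
    rw [map_finsuppSum]
    exact Finsupp.sum_congr fun a _ => map_smul _ _ _
  have h2 : ∀ a : FreeMonoid I,
      B (f a) y = y.coeff.sum fun b cb => cb • B (f a) (MonoidAlgebra.single b 1) := by
    intro a
    conv_lhs => rw [← MonoidAlgebra.sum_coeff_single y, map_finsuppSum]
    refine Finsupp.sum_congr fun b _ => ?_
    rw [show (MonoidAlgebra.single b (y.coeff b) : FA K I)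
        = y.coeff b • MonoidAlgebra.single b 1 by
        rw [MonoidAlgebra.smul_single', mul_one], map_smul]
  rw [h1]
  rw [show ((x.coeff.sum fun a ca => ca • B (f a)) y)
      = x.coeff.sum fun a ca => (ca • B (f a)) y from map_finsuppSum (LinearMap.applyₗ y) _ _]
  refine Finsupp.sum_congr fun a _ => ?_
  rw [LinearMap.smul_apply, h2 a, Finsupp.smul_sum]
  exact Finsupp.sum_congr fun b _ => by rw [smul_smul]

lemma Dop_eq_sum (i : I) (x : FA K I) :
    Dop i x = x.coeff.sum fun a ca => ca • Dword i (FreeMonoid.toList a) := by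
  rw [Dop, LinearMap.comp_apply]; erw [Finsupp.lsum_apply]; rfl

/-- `D_i` is a twisted derivation for the quantum shuffle product:
`D_i(w_j) = δ_{ij}` and, for `x ∈ F` and homogeneous `y` of degree `μ`,
`D_i(x ⋆ y) = q_{α_i, μ} D_i(x) ⋆ y + x ⋆ D_i(y)`. -/
theorem Dop_twisted_derivation (qm : I → I → K) (i : I) :
    (∀ j : I, Dop i (wgen K j) = if i = j then (1 : FA K I) else 0) ∧
    (∀ (x y : FA K I) (μ : I → ℕ),
      (∀ w ∈ y.coeff.support, ∀ k : I, (FreeMonoid.toList w).count k = μ k) →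
      Dop i (shuffle qm x y)
        = (∏ k : I, qm i k ^ μ k) • shuffle qm (Dop i x) y
            + shuffle qm x (Dop i y)) := by
  constructor
  · intro j
    rw [wgen, Dop_single, one_smul]
    by_cases h : i = j
    · subst h
      simp [Dword, MonoidAlgebra.one_def]
    · rw [if_neg h]
      simp [Dword, Ne.symm h]
  · intro x y μ hy
    set C : K := ∏ k, qm i k ^ μ k with hC
    have hq : ∀ b ∈ y.coeff.support, qrow qm i (FreeMonoid.toList b) = C := fun b hb =>
      Finset.prod_congr rfl fun k _ => by rw [hy b hb k]
    have e1 : Dop i (shuffle qm x y)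
        = x.coeff.sum fun a ca => y.coeff.sum fun b cb =>
            ((ca * cb) • (C • shuffleHom qm (Dword i (FreeMonoid.toList a)) (MonoidAlgebra.single b 1))
              + (ca * cb) • shuffleHom qm (MonoidAlgebra.single a 1) (Dword i (FreeMonoid.toList b))) := by
      rw [shuffle, map_finsuppSum]
      refine Finsupp.sum_congr fun a _ => ?_
      rw [map_finsuppSum]
      refine Finsupp.sum_congr fun b hb => ?_
      rw [map_smul, key qm i (FreeMonoid.toList a) (FreeMonoid.toList b),
        FreeMonoid.ofList_toList, FreeMonoid.ofList_toList, hq b hb, smul_add]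
    have e2 : C • shuffle qm (Dop i x) y
        = x.coeff.sum fun a ca => y.coeff.sum fun b cb =>
            (ca * cb) • (C • shuffleHom qm (Dword i (FreeMonoid.toList a)) (MonoidAlgebra.single b 1)) := by
      rw [← shuffleHom_eq, Dop_eq_sum, bil_expand, Finsupp.smul_sum]
      refine Finsupp.sum_congr fun a _ => ?_
      rw [Finsupp.smul_sum]
      refine Finsupp.sum_congr fun b _ => ?_
      rw [smul_comm]
    have e3 : shuffle qm x (Dop i y)
        = x.coeff.sum fun a ca => y.coeff.sum fun b cb =>
            (ca * cb) • shuffleHom qm (MonoidAlgebra.single a 1) (Dword i (FreeMonoid.toList b)) := by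
      rw [← shuffleHom_eq]
      rw [show shuffleHom qm x (Dop i y) = (shuffleHom qm).flip (Dop i y) x from rfl]
      rw [Dop_eq_sum, bil_expand, Finsupp.sum_comm]
      refine Finsupp.sum_congr fun a _ => Finsupp.sum_congr fun b _ => ?_
      rw [LinearMap.flip_apply, mul_comm]
    rw [e1, e2, e3, ← Finsupp.sum_add]
    refine Finsupp.sum_congr fun a _ => ?_
    rw [← Finsupp.sum_add]
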